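/- For n ≥ 3 let δ_n denote the unique real number in (0, 1/2) such that ∑_{i=0}^{n−1} (1/2 + δ_n)^i = 2. Then the sequence (δ_n) is strictly decreasing (δ_{n+1} < δ_n for all n ≥ 3) and δ_n tends to 0 as n tends to infinity. -/
import Mathlib


open Filter

theorem stmt18 (δ : ℕ → ℝ)
    (hδ : ∀ n : ℕ, 3 ≤ n → δ n ∈ Set.Ioo (0 : ℝ) (1 / 2) ∧
      ∑ i ∈ Finset.range n, (1 / 2 + δ n) ^ i = 2) :
    (∀ n : ℕ, 3 ≤ n → δ (n + 1) < δ n) ∧ Tendsto δ atTop (nhds 0) := by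
  have hdec : ∀ n : ℕ, 3 ≤ n → δ (n + 1) < δ n := by
    intro n hn
    obtain ⟨⟨h0, h1⟩, hs⟩ := hδ n hn
    obtain ⟨⟨h0', h1'⟩, hs'⟩ := hδ (n + 1) (by omega)
    by_contra h
    push_neg at h
    have hx : (0 : ℝ) ≤ 1 / 2 + δ n := by linarith
    have hle : ∑ i ∈ Finset.range (n + 1), (1 / 2 + δ n) ^ i ≤
        ∑ i ∈ Finset.range (n + 1), (1 / 2 + δ (n + 1)) ^ i := by
      apply Finset.sum_le_sum
      intro i _
      exact pow_le_pow_left₀ hx (by linarith) i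
    rw [Finset.sum_range_succ, hs] at hle
    rw [hs'] at hle
    have : 0 < (1 / 2 + δ n) ^ n := pow_pos (by linarith) n
    linarith
  refine ⟨hdec, ?_⟩
  -- δ n ≤ δ 3 for n ≥ 3
  have hmono : ∀ n : ℕ, 3 ≤ n → δ n ≤ δ 3 := by
    intro n hn
    induction n with
    | zero => omega
    | succ m ih =>
      rcases Nat.lt_or_ge m 3 with hm | hm
      · have : m + 1 = 3 := by omega
        rw [this]
      · exact le_of_lt (lt_of_lt_of_le (hdec m hm) (ih hm))
  -- δ n = (1/2 + δ n)^n / 2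
  have hval : ∀ n : ℕ, 3 ≤ n → δ n = (1 / 2 + δ n) ^ n / 2 := by
    intro n hn
    obtain ⟨⟨h0, h1⟩, hs⟩ := hδ n hn
    have hne : (1 / 2 + δ n : ℝ) ≠ 1 := by intro h; linarith
    rw [geom_sum_eq hne] at hs
    have hne2 : (1 / 2 + δ n : ℝ) - 1 ≠ 0 := fun h => hne (by linarith)
    rw [div_eq_iff hne2] at hs
    linarith
  obtain ⟨⟨h03, h13⟩, _⟩ := hδ 3 le_rfl
  set c : ℝ := 1 / 2 + δ 3 with hc
  have hc0 : (0 : ℝ) ≤ c := by rw [hc]; linarith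
  have hc1 : c < 1 := by rw [hc]; linarith
  have htc : Tendsto (fun n : ℕ => c ^ n / 2) atTop (nhds 0) := by
    have := (tendsto_pow_atTop_nhds_zero_of_lt_one hc0 hc1).div_const 2
    simpa using this
  apply squeeze_zero' (g := fun n : ℕ => c ^ n / 2) ?_ ?_ htc
  · filter_upwards [eventually_ge_atTop 3] with n hn
    exact le_of_lt (hδ n hn).1.1
  · filter_upwards [eventually_ge_atTop 3] with n hn
    obtain ⟨⟨h0, h1⟩, _⟩ := hδ n hn
    rw [hval n hn]
    have : (1 / 2 + δ n) ^ n ≤ c ^ n :=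
      pow_le_pow_left₀ (by linarith) (by rw [hc]; linarith [hmono n hn]) n
    linarith
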